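/- Assume X is functorially finite in C and τX = X. Then (C, C) is an X-mutation pair: for every object A of C there is a distinguished triangle A → X₀ → B → A⟦1⟧ with X₀ in X whose first morphism is a left X-approximation of A and whose second morphism is a right X-approximation of B, and for every object B of C there is such a distinguished triangle A → X₀ → B → A⟦1⟧ ending at B. -/

import Mathlib

/-!
Common definitions: the ideal of morphisms factoring through a subcategory `X`
(given as a set of objects of `C`), `X`-monic and `X`-epic morphisms, left and
right `X`-approximations, additive subcategories closed under isomorphisms,
direct sums and direct summands, and the additive quotient category `C/X`
(realized via `CategoryTheory.Quotient` of the relation `xRel X`).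
-/

open CategoryTheory Category Limits Pretriangulated

universe v u

namespace PaperStmt

variable {C : Type u} [Category.{v} C]

/-- `f` factors through an object of `X`. -/
def FactorsThru (X : Set C) {A B : C} (f : A ⟶ B) : Prop :=
  ∃ (M : C) (g : A ⟶ M) (h : M ⟶ B), M ∈ X ∧ g ≫ h = f

/-- `f : A ⟶ B` is `X`-monic: the map `Hom(B, X') → Hom(A, X')`, `g ↦ g ∘ f`,
is surjective for every object `X'` of `X`. -/
def IsXMonic (X : Set C) {A B : C} (f : A ⟶ B) : Prop :=
  ∀ ⦃X' : C⦄, X' ∈ X → ∀ g : A ⟶ X', ∃ h : B ⟶ X', f ≫ h = g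

/-- `f : A ⟶ B` is `X`-epic: the map `Hom(X', A) → Hom(X', B)`, `g ↦ f ∘ g`,
is surjective for every object `X'` of `X`. -/
def IsXEpic (X : Set C) {A B : C} (f : A ⟶ B) : Prop :=
  ∀ ⦃X' : C⦄, X' ∈ X → ∀ g : X' ⟶ B, ∃ h : X' ⟶ A, h ≫ f = g

/-- `α : A ⟶ X₀` is a left `X`-approximation of `A`: `X₀` lies in `X` and every
morphism from `A` to an object of `X` factors through `α`. -/
def IsLeftApprox (X : Set C) {A X₀ : C} (α : A ⟶ X₀) : Prop :=
  X₀ ∈ X ∧ IsXMonic X α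

/-- `β : X₀ ⟶ B` is a right `X`-approximation of `B`: `X₀` lies in `X` and every
morphism from an object of `X` to `B` factors through `β`. -/
def IsRightApprox (X : Set C) {X₀ B : C} (β : X₀ ⟶ B) : Prop :=
  X₀ ∈ X ∧ IsXEpic X β

/-- `X` is (the object class of) a full additive subcategory of `C`, closed
under isomorphisms, finite direct sums and direct summands. -/
structure IsAdditiveClosedSubcat [Preadditive C] [HasBinaryBiproducts C] (X : Set C) :
    Prop where
  zero_mem : ∀ Z : C, IsZero Z → Z ∈ X
  iso_closed : ∀ {A B : C}, (A ≅ B) → A ∈ X → B ∈ X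
  sum_closed : ∀ {A B : C}, A ∈ X → B ∈ X → (A ⊞ B) ∈ X
  summand_closed : ∀ {A B : C}, (A ⊞ B) ∈ X → A ∈ X

/-- Two morphisms are identified in the quotient category `C/X` precisely when
their difference factors through an object of `X`. -/
def xRel [Preadditive C] (X : Set C) : HomRel C :=
  fun _ _ f g => FactorsThru X (f - g)

section Triangulated

variable [Preadditive C] [HasZeroObject C] [HasShift C ℤ]
  [∀ n : ℤ, (shiftFunctor C n).Additive] [Pretriangulated C]

/-- `(𝒜, ℬ)` is an `X`-mutation pair in the triangulated category `C`. -/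
def IsMutationPair (X 𝒜 ℬ : Set C) : Prop :=
  X ⊆ 𝒜 ∧ X ⊆ ℬ ∧
  (∀ A ∈ 𝒜, ∃ (X₀ B' : C) (α : A ⟶ X₀) (β : X₀ ⟶ B') (δ : B' ⟶ A⟦(1 : ℤ)⟧),
      B' ∈ ℬ ∧ (Triangle.mk α β δ ∈ distTriang C) ∧
      IsLeftApprox X α ∧ IsRightApprox X β) ∧
  (∀ B ∈ ℬ, ∃ (A' X₀ : C) (α : A' ⟶ X₀) (β : X₀ ⟶ B) (δ : B ⟶ A'⟦(1 : ℤ)⟧),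
      A' ∈ 𝒜 ∧ (Triangle.mk α β δ ∈ distTriang C) ∧
      IsLeftApprox X α ∧ IsRightApprox X β)

end Triangulated

/-- in a `k`-linear Hom-finite triangulated category with
Auslander–Reiten (Serre) duality, if `X` is functorially finite and `τX = X`,
then `(C, C)` is an `X`-mutation pair. -/
theorem statement11 [Preadditive C] [HasZeroObject C] [HasShift C ℤ]
    [∀ n : ℤ, (shiftFunctor C n).Additive] [Pretriangulated C] [HasBinaryBiproducts C]
    (k : Type*) [Field k] [CategoryTheory.Linear k C]
    [∀ A B : C, FiniteDimensional k (A ⟶ B)]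
    (τ : C ⥤ C) [τ.Additive] [τ.IsEquivalence]
    (e : ∀ A B : C, (A ⟶ (B⟦(1 : ℤ)⟧)) ≃ₗ[k] ((B ⟶ τ.obj A) →ₗ[k] k))
    (he₁ : ∀ {A' A B : C} (f : A' ⟶ A) (φ : A ⟶ (B⟦(1 : ℤ)⟧)) (g : B ⟶ τ.obj A'),
      e A' B (f ≫ φ) g = e A B φ (g ≫ τ.map f))
    (he₂ : ∀ {A B B' : C} (h : B ⟶ B') (φ : A ⟶ (B⟦(1 : ℤ)⟧)) (g : B' ⟶ τ.obj A),
      e A B' (φ ≫ (h⟦(1 : ℤ)⟧')) g = e A B φ (h ≫ g))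
    (X : Set C) (hX : IsAdditiveClosedSubcat X)
    (hcov : ∀ A : C, ∃ (X₀ : C) (α : A ⟶ X₀), IsLeftApprox X α)
    (hcontra : ∀ B : C, ∃ (X₀ : C) (β : X₀ ⟶ B), IsRightApprox X β)
    (hτ₁ : ∀ X' ∈ X, τ.obj X' ∈ X)
    (hτ₂ : ∀ X' ∈ X, ∃ Y ∈ X, Nonempty (τ.obj Y ≅ X')) :
    IsMutationPair X Set.univ Set.univ := by
  refine ⟨fun _ _ => trivial, fun _ _ => trivial, ?_, ?_⟩
  · -- for each A, triangle A → X₀ → B with α a left approximation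
    intro A _
    obtain ⟨X₀, α, hX₀, hmon⟩ := hcov A
    obtain ⟨B, β, δ, hT⟩ := Pretriangulated.distinguished_cocone_triangle α
    refine ⟨X₀, B, α, β, δ, trivial, hT, ⟨hX₀, hmon⟩, hX₀, ?_⟩
    -- β is X-epic
    intro X' hX' g
    have hδ : g ≫ δ = 0 := by
      apply (e X' A).injective
      rw [map_zero]
      ext g''
      obtain ⟨h, hh⟩ := hmon (hτ₁ X' hX') g''
      have key0 := Pretriangulated.comp_distTriang_mor_zero₃₁ _ hT
      change δ ≫ (α⟦(1 : ℤ)⟧') = 0 at key0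
      have key : (g ≫ δ) ≫ (α⟦(1 : ℤ)⟧') = 0 := by
        rw [Category.assoc, key0, comp_zero]
      calc (e X' A) (g ≫ δ) g'' = (e X' A) (g ≫ δ) (α ≫ h) := by rw [hh]
        _ = (e X' X₀) ((g ≫ δ) ≫ (α⟦(1 : ℤ)⟧')) h := (he₂ α (g ≫ δ) h).symm
        _ = 0 := by rw [key, map_zero]; rfl
    obtain ⟨h, hh⟩ := Pretriangulated.Triangle.coyoneda_exact₃ _ hT g hδ
    exact ⟨h, hh.symm⟩
  · -- for each B, triangle A → X₀ → B with β a right approximation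
    intro B _
    obtain ⟨X₀, β, hX₀, hepi⟩ := hcontra B
    obtain ⟨A, α, δ, hT⟩ := Pretriangulated.distinguished_cocone_triangle₁ β
    refine ⟨A, X₀, α, β, δ, trivial, hT, ⟨hX₀, ?_⟩, hX₀, hepi⟩
    -- α is X-monic
    intro X' hX' g
    have hδg : δ ≫ (g⟦(1 : ℤ)⟧') = 0 := by
      apply (e B X').injective
      rw [map_zero]
      ext h'
      obtain ⟨Y, hY, ⟨i⟩⟩ := hτ₂ X' hX'
      obtain ⟨u, hu⟩ := hepi hY (τ.preimage (i.hom ≫ h'))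
      have hfac : g ≫ h' = (g ≫ i.inv ≫ τ.map u) ≫ τ.map β := by
        rw [Category.assoc, Category.assoc, ← τ.map_comp, hu, τ.map_preimage,
          Iso.inv_hom_id_assoc]
      calc (e B X') (δ ≫ (g⟦(1 : ℤ)⟧')) h' = (e B A) δ (g ≫ h') := he₂ g δ h'
        _ = (e B A) δ ((g ≫ i.inv ≫ τ.map u) ≫ τ.map β) := by rw [hfac]
        _ = (e X₀ A) (β ≫ δ) (g ≫ i.inv ≫ τ.map u) :=
            (he₁ β δ (g ≫ i.inv ≫ τ.map u)).symm
        _ = 0 := by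
            have key0 := Pretriangulated.comp_distTriang_mor_zero₂₃ _ hT
            change β ≫ δ = 0 at key0
            rw [key0, map_zero]; rfl
    have hzero : (Triangle.mk α β δ).invRotate.mor₁ ≫ g = 0 := by
      change (-(δ⟦(-1 : ℤ)⟧') ≫ (shiftFunctorCompIsoId C (1 : ℤ) (-1 : ℤ)
        (add_neg_cancel (1 : ℤ))).hom.app A) ≫ g = 0
      rw [Preadditive.neg_comp, Category.assoc, neg_eq_zero]
      have hnat : (shiftFunctorCompIsoId C (1 : ℤ) (-1 : ℤ)
            (add_neg_cancel (1 : ℤ))).hom.app A ≫ g =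
          ((shiftFunctor C (1 : ℤ)).map g)⟦(-1 : ℤ)⟧' ≫
            (shiftFunctorCompIsoId C (1 : ℤ) (-1 : ℤ)
              (add_neg_cancel (1 : ℤ))).hom.app X' := by
        have := (shiftFunctorCompIsoId C (1 : ℤ) (-1 : ℤ)
          (add_neg_cancel (1 : ℤ))).hom.naturality g
        dsimp at this
        rw [this]
      rw [hnat, ← Category.assoc, ← Functor.map_comp, hδg,
        Functor.map_zero, zero_comp]
    obtain ⟨h, hh⟩ := Pretriangulated.Triangle.yoneda_exact₂ _
      (Pretriangulated.inv_rot_of_distTriang _ hT) g hzero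
    exact ⟨h, hh.symm⟩

end PaperStmt
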